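/- Let q ≥ 1 be an integer, γ ∈ (0,1) and β > 1, and set α_n := 1 − γ/n^β. Then sup_{t ∈ [0,1]} | Λ_q(n,t)/n² − t² | → 0 as n → ∞; that is, Λ_q(n,t) = n² t² (1 + o(1)) uniformly in t ∈ [0,1]. -/

import Mathlib

lemma arith_aux (N u L P E t : ℝ) (hN : 1 ≤ N) (hu0 : 0 ≤ u) (hu1 : u ≤ N*t)
    (hu2 : N*t < u+1) (ht0 : 0 ≤ t) (ht1 : t ≤ 1) (hL1 : L ≤ u^2) (hL2 : P*u^2 ≤ L)
    (hPe : 1-E ≤ P) (hE0 : 0 ≤ E) :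
    |t^2 - L/N^2| ≤ 2/N + E := by
  have hN0 : (0:ℝ) < N := by linarith
  have hN2 : (0:ℝ) < N^2 := by positivity
  have hntN : N*t ≤ N := by nlinarith
  have huN : u ≤ N := by linarith
  have h2N : 2/N*N^2 = 2*N := by field_simp
  have key1 : (1-E) * u^2 ≤ L := le_trans (mul_le_mul_of_nonneg_right hPe (sq_nonneg _)) hL2
  have key2 : N^2*t^2 - u^2 ≤ 2*N := by
    nlinarith [mul_nonneg (by linarith : (0:ℝ) ≤ u+1-N*t) (by linarith : (0:ℝ) ≤ N*t+u)]
  have key3 : E*u^2 ≤ E*N^2 := mul_le_mul_of_nonneg_left (by nlinarith) hE0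
  have hdown : L / N^2 ≤ t^2 := by
    rw [div_le_iff₀ hN2]
    nlinarith [mul_le_mul hu1 hu1 hu0 (by positivity : (0:ℝ) ≤ N*t)]
  have hup : t^2 - (2/N + E) ≤ L / N^2 := by
    rw [le_div_iff₀ hN2]
    nlinarith [key1, key2, key3, h2N]
  rw [abs_le]
  constructor
  · have : 0 ≤ 2/N := by positivity
    linarith
  · linarith

lemma key (q n : ℕ) (hq : 1 ≤ q) (hn : 1 ≤ n) (γ β : ℝ) (hγ0 : 0 < γ) (hγ1 : γ < 1)
    (hβ : 1 < β) (t : ℝ) (ht0 : 0 ≤ t) (ht1 : t ≤ 1) :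
    |t ^ 2 - (∑ i ∈ Finset.Icc 1 ⌊(n : ℝ) * t⌋₊, ∑ j ∈ Finset.Icc 1 ⌊(n : ℝ) * t⌋₊,
      (1 - γ / (n : ℝ) ^ β) ^ (q * Nat.dist i j)) / (n : ℝ) ^ 2|
      ≤ 2 / (n : ℝ) + (q : ℝ) * γ * (n : ℝ) ^ (1 - β) := by
  set α : ℝ := 1 - γ / (n : ℝ) ^ β with hαdef
  set m : ℕ := ⌊(n : ℝ) * t⌋₊ with hmdef
  set Λ : ℝ := ∑ i ∈ Finset.Icc 1 m, ∑ j ∈ Finset.Icc 1 m, α ^ (q * Nat.dist i j) with hΛdef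
  have hN1 : (1 : ℝ) ≤ (n : ℝ) := by exact_mod_cast hn
  have hN0 : (0 : ℝ) < (n : ℝ) := by linarith
  have hnβ : (1 : ℝ) ≤ (n : ℝ) ^ β := by
    calc (1:ℝ) = (1:ℝ) ^ β := (Real.one_rpow β).symm
    _ ≤ (n : ℝ) ^ β := Real.rpow_le_rpow zero_le_one hN1 (by linarith)
  have hγdiv0 : 0 ≤ γ / (n:ℝ)^β := div_nonneg hγ0.le (by linarith)
  have hγdiv1 : γ / (n:ℝ)^β ≤ γ := div_le_self hγ0.le hnβ
  have hα0 : 0 < α := by simp only [hαdef]; linarith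
  have hα1 : α ≤ 1 := by simp only [hαdef]; linarith
  have hu1 : (m : ℝ) ≤ (n : ℝ) * t := Nat.floor_le (by positivity)
  have hu2 : (n : ℝ) * t < (m : ℝ) + 1 := Nat.lt_floor_add_one _
  have hu0 : (0 : ℝ) ≤ (m : ℝ) := Nat.cast_nonneg _
  have huN : (m : ℝ) ≤ (n : ℝ) := by nlinarith
  have hmn : m ≤ n := by exact_mod_cast huN
  have hdist : ∀ i ∈ Finset.Icc 1 m, ∀ j ∈ Finset.Icc 1 m, q * Nat.dist i j ≤ q * n := by
    intro i hi j hj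
    simp only [Finset.mem_Icc] at hi hj
    have : Nat.dist i j ≤ n := by
      have hi' := le_trans hi.2 hmn
      have hj' := le_trans hj.2 hmn
      simp only [Nat.dist]
      omega
    exact Nat.mul_le_mul_left q this
  have hΛ1 : Λ ≤ (m : ℝ) ^ 2 := by
    calc Λ ≤ ∑ i ∈ Finset.Icc 1 m, ∑ j ∈ Finset.Icc 1 m, (1 : ℝ) :=
      Finset.sum_le_sum fun i hi => Finset.sum_le_sum fun j hj =>
        pow_le_one₀ hα0.le hα1
    _ = (m : ℝ) ^ 2 := by simp [Nat.card_Icc, sq]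
  have hΛ2 : α ^ (q * n) * (m : ℝ) ^ 2 ≤ Λ := by
    calc α ^ (q*n) * (m:ℝ)^2
        = ∑ i ∈ Finset.Icc 1 m, ∑ j ∈ Finset.Icc 1 m, α ^ (q*n) := by
          simp [Nat.card_Icc, sq]; ring
    _ ≤ Λ := Finset.sum_le_sum fun i hi => Finset.sum_le_sum fun j hj =>
        pow_le_pow_of_le_one hα0.le hα1 (hdist i hi j hj)
  have hbern : 1 - ((q:ℝ)*(n:ℝ)) * (γ / (n:ℝ)^β) ≤ α ^ (q*n) := by
    have h := one_add_mul_le_pow (a := -(γ / (n:ℝ)^β)) (by linarith) (q*n)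
    have heq : (1 + -(γ / (n:ℝ)^β)) = α := by simp only [hαdef]; ring
    rw [heq] at h
    push_cast at h
    linarith
  have hE : ((q:ℝ)*(n:ℝ)) * (γ / (n:ℝ)^β) = (q:ℝ) * γ * (n:ℝ) ^ (1-β) := by
    rw [Real.rpow_sub hN0, Real.rpow_one]
    field_simp
  have hE0 : 0 ≤ (q:ℝ) * γ * (n:ℝ) ^ (1-β) := by positivity
  have hPe : 1 - (q:ℝ) * γ * (n:ℝ) ^ (1-β) ≤ α ^ (q*n) := by rw [← hE]; exact hbern
  exact arith_aux (n:ℝ) (m:ℝ) Λ (α^(q*n)) _ t hN1 hu0 hu1 hu2 ht0 ht1 hΛ1 hΛ2 hPe hE0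

/-- `Λ_q(n,t) = ∑_{i=1}^{⌊nt⌋} ∑_{j=1}^{⌊nt⌋} α^{q|i−j|}`. -/
noncomputable def Lam (α : ℝ) (q n : ℕ) (t : ℝ) : ℝ :=
  ∑ i ∈ Finset.Icc 1 ⌊(n : ℝ) * t⌋₊, ∑ j ∈ Finset.Icc 1 ⌊(n : ℝ) * t⌋₊,
    α ^ (q * Nat.dist i j)

/-- For `β > 1` and `α_n = 1 − γ/n^β`, `Λ_q(n,t)/n² → t²` uniformly in `t ∈ [0,1]`. -/
theorem stmt_6 (q : ℕ) (hq : 1 ≤ q) (γ β : ℝ) (hγ : γ ∈ Set.Ioo (0:ℝ) 1) (hβ : 1 < β) :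
    TendstoUniformlyOn
      (fun (n : ℕ) (t : ℝ) => Lam (1 - γ / (n : ℝ) ^ β) q n t / (n : ℝ) ^ 2)
      (fun t => t ^ 2) Filter.atTop (Set.Icc 0 1) := by
  obtain ⟨hγ0, hγ1⟩ := hγ
  rw [Metric.tendstoUniformlyOn_iff]
  intro ε hε
  have hB : Filter.Tendsto (fun n : ℕ => 2/(n:ℝ) + (q:ℝ)*γ*(n:ℝ)^(1-β))
      Filter.atTop (nhds 0) := by
    have h1 : Filter.Tendsto (fun n : ℕ => 2/(n:ℝ)) Filter.atTop (nhds 0) :=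
      tendsto_const_div_atTop_nhds_zero_nat 2
    have h2 : Filter.Tendsto (fun n : ℕ => (n:ℝ)^(1-β)) Filter.atTop (nhds 0) := by
      have h := (tendsto_rpow_neg_atTop (by linarith : (0:ℝ) < β - 1)).comp
        (tendsto_natCast_atTop_atTop (R := ℝ))
      simpa [Function.comp_def, neg_sub] using h
    have h3 := h2.const_mul ((q:ℝ)*γ)
    simpa using h1.add h3
  have hev : ∀ᶠ n : ℕ in Filter.atTop, 2/(n:ℝ) + (q:ℝ)*γ*(n:ℝ)^(1-β) < ε :=
    hB.eventually (gt_mem_nhds hε)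
  filter_upwards [hev, Filter.eventually_ge_atTop 1] with n hn1 hn2 t ht
  rw [Real.dist_eq]
  calc |t^2 - Lam (1 - γ/(n:ℝ)^β) q n t / (n:ℝ)^2|
      ≤ 2/(n:ℝ) + (q:ℝ)*γ*(n:ℝ)^(1-β) :=
        key q n hq hn2 γ β hγ0 hγ1 hβ t ht.1 ht.2
    _ < ε := hn1
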